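/- Let $d \in \mathbb{N}$, $\lambda > 0$, $\alpha > 1/2$ with $2\alpha\lambda > 1$, $b \ge 2$, $m \ge 0$, product weights $\gamma_{\mathfrak{u}} = \prod_{j\in\mathfrak{u}} \gamma_j$ with each $\gamma_j > 0$, and reduction indices $w_1 \le w_2 \le \cdots \le w_d$ in $\mathbb{N}_0$. Then $\sum_{\emptyset \ne \mathfrak{u} \subseteq [d]} \gamma_{\mathfrak{u}}^{\lambda} \frac{2(2\zeta(2\alpha\lambda))^{|\mathfrak{u}|}}{b^{\max\{0, m - \max_{j\in\mathfrak{u}} w_j\}}} \le b^{-m}\left(-1 + 2\prod_{j=1}^{d}\left(1 + \gamma_j^{\lambda} \, 2\zeta(2\alpha\lambda)\, b^{\min\{m, w_j\}}\right)\right)$. -/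
import Mathlib


theorem stmt2 (d : ℕ) (lam α : ℝ) (hlam : 0 < lam) (hα : 1/2 < α) (h2 : 1 < 2*α*lam)
    (b : ℕ) (hb : 2 ≤ b) (m : ℕ) (γ : ℕ → ℝ) (hγ : ∀ j, 0 < γ j)
    (w : ℕ → ℕ) (hw : ∀ i j, i ≤ j → w i ≤ w j) :
    ∑ 𝔲 ∈ (Finset.Icc 1 d).powerset.filter (· ≠ ∅),
      (∏ j ∈ 𝔲, γ j) ^ lam * (2 * (2 * (∑' n : ℕ, (1:ℝ)/((n:ℝ)+1) ^ (2*α*lam))) ^ 𝔲.card)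
        / (b:ℝ) ^ (m - 𝔲.sup w)
    ≤ ((b:ℝ) ^ m)⁻¹ *
      (-1 + 2 * ∏ j ∈ Finset.Icc 1 d,
        (1 + (γ j) ^ lam * (2 * (∑' n : ℕ, (1:ℝ)/((n:ℝ)+1) ^ (2*α*lam))) *
          (b:ℝ) ^ (min m (w j)))) := by
  set Z : ℝ := ∑' n : ℕ, (1:ℝ)/((n:ℝ)+1) ^ (2*α*lam) with hZdef
  have hZ0 : 0 ≤ Z := tsum_nonneg fun n => by positivity
  set x : ℕ → ℝ := fun j => (γ j) ^ lam * (2 * Z) * (b:ℝ) ^ (min m (w j)) with hxdef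
  have hb1 : (1:ℝ) ≤ (b:ℝ) := by exact_mod_cast (le_trans one_le_two hb)
  have hb0 : (0:ℝ) < (b:ℝ) := lt_of_lt_of_le one_pos hb1
  have hx0 : ∀ j, 0 ≤ x j := fun j => by
    have := (Real.rpow_pos_of_pos (hγ j) lam).le
    positivity
  -- Step 1: termwise bound
  have step1 : ∀ 𝔲 ∈ (Finset.Icc 1 d).powerset.filter (· ≠ ∅),
      (∏ j ∈ 𝔲, γ j) ^ lam * (2 * (2 * Z) ^ 𝔲.card) / (b:ℝ) ^ (m - 𝔲.sup w)
      ≤ ((b:ℝ) ^ m)⁻¹ * (2 * ∏ j ∈ 𝔲, x j) := by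
    intro 𝔲 h𝔲
    simp only [Finset.mem_filter, Finset.mem_powerset] at h𝔲
    obtain ⟨hsub, hne⟩ := h𝔲
    obtain ⟨j0, hj0, hsup⟩ :=
      Finset.exists_mem_eq_sup 𝔲 (Finset.nonempty_iff_ne_empty.2 hne) w
    have hγprod : (∏ j ∈ 𝔲, γ j) ^ lam = ∏ j ∈ 𝔲, (γ j) ^ lam :=
      (Real.finset_prod_rpow 𝔲 γ (fun i _ => (hγ i).le) lam).symm
    have hnat : m ≤ (m - 𝔲.sup w) + ∑ j ∈ 𝔲, min m (w j) := by
      have h1 : min m (𝔲.sup w) = min m (w j0) := by rw [hsup]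
      have h2 : min m (w j0) ≤ ∑ j ∈ 𝔲, min m (w j) :=
        Finset.single_le_sum (f := fun j => min m (w j)) (fun i _ => Nat.zero_le _) hj0
      omega
    have hpow : (b:ℝ) ^ m ≤ (b:ℝ) ^ (m - 𝔲.sup w) * (b:ℝ) ^ (∑ j ∈ 𝔲, min m (w j)) := by
      rw [← pow_add]
      exact pow_le_pow_right₀ hb1 hnat
    have hkey : ((b:ℝ) ^ (m - 𝔲.sup w))⁻¹ ≤
        ((b:ℝ) ^ m)⁻¹ * (b:ℝ) ^ (∑ j ∈ 𝔲, min m (w j)) := by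
      rw [inv_le_iff_one_le_mul₀ (by positivity)]
      rw [← div_le_iff₀ (by positivity), one_div, inv_le_iff_one_le_mul₀ (by positivity)]
      calc (1:ℝ) = ((b:ℝ)^m)⁻¹ * (b:ℝ)^m := by
            field_simp
        _ ≤ ((b:ℝ)^m)⁻¹ * ((b:ℝ) ^ (m - 𝔲.sup w) * (b:ℝ) ^ (∑ j ∈ 𝔲, min m (w j))) := by
            gcongr
        _ = ((b:ℝ) ^ m)⁻¹ * (b:ℝ) ^ (∑ j ∈ 𝔲, min m (w j)) * (b:ℝ) ^ (m - 𝔲.sup w) := by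
            ring
    have hprodx : ∏ j ∈ 𝔲, x j =
        (∏ j ∈ 𝔲, (γ j) ^ lam * (2 * Z)) * (b:ℝ) ^ (∑ j ∈ 𝔲, min m (w j)) := by
      rw [← Finset.prod_pow_eq_pow_sum, ← Finset.prod_mul_distrib]
    have hC0 : 0 ≤ ∏ j ∈ 𝔲, (γ j) ^ lam * (2 * Z) :=
      Finset.prod_nonneg fun i _ => by
        have := (Real.rpow_pos_of_pos (hγ i) lam).le; positivity
    calc (∏ j ∈ 𝔲, γ j) ^ lam * (2 * (2 * Z) ^ 𝔲.card) / (b:ℝ) ^ (m - 𝔲.sup w)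
        = 2 * (∏ j ∈ 𝔲, (γ j) ^ lam * (2 * Z)) * ((b:ℝ) ^ (m - 𝔲.sup w))⁻¹ := by
          rw [hγprod, Finset.prod_mul_distrib, Finset.prod_const, div_eq_mul_inv]; ring
      _ ≤ 2 * (∏ j ∈ 𝔲, (γ j) ^ lam * (2 * Z)) *
            (((b:ℝ) ^ m)⁻¹ * (b:ℝ) ^ (∑ j ∈ 𝔲, min m (w j))) := by
          gcongr
      _ = ((b:ℝ) ^ m)⁻¹ * (2 * ∏ j ∈ 𝔲, x j) := by
          rw [hprodx]; ring
  -- Step 2: combine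
  calc ∑ 𝔲 ∈ (Finset.Icc 1 d).powerset.filter (· ≠ ∅),
        (∏ j ∈ 𝔲, γ j) ^ lam * (2 * (2 * Z) ^ 𝔲.card) / (b:ℝ) ^ (m - 𝔲.sup w)
      ≤ ∑ 𝔲 ∈ (Finset.Icc 1 d).powerset.filter (· ≠ ∅),
        ((b:ℝ) ^ m)⁻¹ * (2 * ∏ j ∈ 𝔲, x j) := Finset.sum_le_sum step1
    _ ≤ ((b:ℝ) ^ m)⁻¹ * (-1 + 2 * ∏ j ∈ Finset.Icc 1 d, (1 + x j)) := by
        have hps : ∏ j ∈ Finset.Icc 1 d, (1 + x j) =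
            ∑ t ∈ (Finset.Icc 1 d).powerset, ∏ i ∈ t, x i := by
          have := Finset.prod_add x (fun _ => (1:ℝ)) (Finset.Icc 1 d)
          simpa [add_comm] using this
        have hfilter : (Finset.Icc 1 d).powerset.filter (· ≠ ∅) =
            (Finset.Icc 1 d).powerset.erase ∅ := Finset.filter_ne' _ _
        have hmem : (∅ : Finset ℕ) ∈ (Finset.Icc 1 d).powerset :=
          Finset.empty_mem_powerset _
        have hsum : ∑ 𝔲 ∈ (Finset.Icc 1 d).powerset.filter (· ≠ ∅), ∏ j ∈ 𝔲, x j =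
            (∑ t ∈ (Finset.Icc 1 d).powerset, ∏ i ∈ t, x i) - 1 := by
          rw [hfilter]
          have := Finset.add_sum_erase _ (fun t => ∏ i ∈ t, x i) hmem
          simp only [Finset.prod_empty] at this
          linarith
        have e1 : ∑ 𝔲 ∈ (Finset.Icc 1 d).powerset.filter (· ≠ ∅),
            ((b:ℝ) ^ m)⁻¹ * (2 * ∏ j ∈ 𝔲, x j)
            = ((b:ℝ) ^ m)⁻¹ * 2 *
              ∑ 𝔲 ∈ (Finset.Icc 1 d).powerset.filter (· ≠ ∅), ∏ j ∈ 𝔲, x j := by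
          rw [Finset.mul_sum]
          exact Finset.sum_congr rfl fun _ _ => by ring
        rw [e1, hsum, ← hps]
        generalize ∏ j ∈ Finset.Icc 1 d, (1 + x j) = P
        have hbm : (0:ℝ) < ((b:ℝ) ^ m)⁻¹ := by positivity
        nlinarith [hbm]
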